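/- Let M be an orientable hypersurface of S²×S² with C = ⟨PN,N⟩ constantly equal to c₀ ∈ (-1,1). Then AX = 0 where X = PN - c₀N (so 0 is a principal curvature at every point), and in the orthonormal frame E₁ = X/√(1-c₀²), E₂ = (J₁N+J₂N)/√(2(1+c₀)), E₃ = (J₁N-J₂N)/√(2(1-c₀)), the tangential product structure is Pᵀ = diag(-c₀, 1, -1). -/

import Mathlib

open Matrix

/-- Points of the (local) hypersurface are parametrized by a chart with values in `ℝ³`. -/
abbrev V3 := Fin 3 → ℝ

lemma hasFDerivAt_dotP {f g : V3 → V3} {f' g' : V3 →L[ℝ] V3} {x : V3}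
    (hf : HasFDerivAt f f' x) (hg : HasFDerivAt g g' x) :
    HasFDerivAt (fun y => f y ⬝ᵥ g y)
      (∑ i : Fin 3, (f x i • ((ContinuousLinearMap.proj i).comp g')
        + g x i • ((ContinuousLinearMap.proj i).comp f'))) x := by
  have h : ∀ i : Fin 3, HasFDerivAt (fun y => f y i * g y i)
      (f x i • ((ContinuousLinearMap.proj i).comp g')
        + g x i • ((ContinuousLinearMap.proj i).comp f')) x := fun i => by
    simpa [Function.comp_def, Pi.mul_def] using
      (((ContinuousLinearMap.proj i).hasFDerivAt.comp x hf).mul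
      ((ContinuousLinearMap.proj i).hasFDerivAt.comp x hg))
  simpa [dotProduct] using HasFDerivAt.fun_sum (fun i (_ : i ∈ Finset.univ) => h i)

lemma fderiv_dotP_apply {f g : V3 → V3} {f' g' : V3 →L[ℝ] V3} {x : V3}
    (hf : HasFDerivAt f f' x) (hg : HasFDerivAt g g' x) (v : V3) :
    fderiv ℝ (fun y => f y ⬝ᵥ g y) x v = f' v ⬝ᵥ g x + f x ⬝ᵥ g' v := by
  rw [(hasFDerivAt_dotP hf hg).fderiv]
  simp [dotProduct, Finset.sum_add_distrib, mul_comm]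
  ring

lemma dotP_const_deriv {f g : V3 → V3} {f' g' : V3 →L[ℝ] V3} {x : V3} {c : ℝ}
    (hf : HasFDerivAt f f' x) (hg : HasFDerivAt g g' x)
    (hconst : ∀ y, f y ⬝ᵥ g y = c) (v : V3) :
    f' v ⬝ᵥ g x + f x ⬝ᵥ g' v = 0 := by
  have h := fderiv_dotP_apply hf hg v
  rw [show (fun y => f y ⬝ᵥ g y) = (fun _ => c) from funext hconst] at h
  simpa using h.symm

/-- Directional derivative of an `ℝ³`-valued map. -/
noncomputable def Dv (f : V3 → V3) (x v : V3) : V3 := fderiv ℝ f x v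

section

variable (c₀ : ℝ) (φ ψ N1 N2 : V3 → V3)

/-- First/second components of `E₁ = X/√(1-c₀²)` (ambient representation:
`X = PN - c₀N = ((1-c₀)N₁, -(1+c₀)N₂)`). -/
noncomputable def E1a (x : V3) : V3 := (Real.sqrt (1 - c₀ ^ 2))⁻¹ • ((1 - c₀) • N1 x)
noncomputable def E1b (x : V3) : V3 := (Real.sqrt (1 - c₀ ^ 2))⁻¹ • (-((1 + c₀) • N2 x))

/-- `E₂ = (J₁N + J₂N)/√(2(1+c₀)) = (2(φ×N₁), 0)/√(2(1+c₀))`. -/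
noncomputable def E2a (x : V3) : V3 :=
  (Real.sqrt (2 * (1 + c₀)))⁻¹ • ((2 : ℝ) • crossProduct (φ x) (N1 x))

/-- `E₃ = (J₁N - J₂N)/√(2(1-c₀)) = (0, 2(ψ×N₂))/√(2(1-c₀))`. -/
noncomputable def E3b (x : V3) : V3 :=
  (Real.sqrt (2 * (1 - c₀)))⁻¹ • ((2 : ℝ) • crossProduct (ψ x) (N2 x))

lemma part2_aux (x : V3) (hm1 : -1 < c₀) (hp1 : c₀ < 1)
    (hsph1x : φ x ⬝ᵥ φ x = 1) (hsph2x : ψ x ⬝ᵥ ψ x = 1)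
    (hn1 : N1 x ⬝ᵥ N1 x = (1 + c₀) / 2) (hn2 : N2 x ⬝ᵥ N2 x = (1 - c₀) / 2)
    (hNt1 : N1 x ⬝ᵥ φ x = 0) (hNt2 : N2 x ⬝ᵥ ψ x = 0) :
      E1a c₀ N1 x ⬝ᵥ E1a c₀ N1 x - E1b c₀ N2 x ⬝ᵥ E1b c₀ N2 x = -c₀ ∧
      E2a c₀ φ N1 x ⬝ᵥ E2a c₀ φ N1 x - (0 : V3) ⬝ᵥ (0 : V3) = 1 ∧
      (0 : V3) ⬝ᵥ (0 : V3) - E3b c₀ ψ N2 x ⬝ᵥ E3b c₀ ψ N2 x = -1 ∧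
      E1a c₀ N1 x ⬝ᵥ E2a c₀ φ N1 x - E1b c₀ N2 x ⬝ᵥ (0 : V3) = 0 ∧
      E1a c₀ N1 x ⬝ᵥ (0 : V3) - E1b c₀ N2 x ⬝ᵥ E3b c₀ ψ N2 x = 0 ∧
      E2a c₀ φ N1 x ⬝ᵥ (0 : V3) - (0 : V3) ⬝ᵥ E3b c₀ ψ N2 x = 0 := by
  have h1p : (0:ℝ) < 1 + c₀ := by linarith
  have h1m : (0:ℝ) < 1 - c₀ := by linarith
  have hsq : (0:ℝ) < 1 - c₀ ^ 2 := by nlinarith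
  have hφN1 : φ x ⬝ᵥ N1 x = 0 := by rw [dotProduct_comm]; exact hNt1
  have hψN2 : ψ x ⬝ᵥ N2 x = 0 := by rw [dotProduct_comm]; exact hNt2
  have hs2 : Real.sqrt (1 - c₀ ^ 2) ^ 2 = 1 - c₀ ^ 2 := Real.sq_sqrt hsq.le
  have hs0 : Real.sqrt (1 - c₀ ^ 2) ≠ 0 := (Real.sqrt_pos.mpr hsq).ne'
  have ht2 : Real.sqrt (2 * (1 + c₀)) ^ 2 = 2 * (1 + c₀) := Real.sq_sqrt (by linarith)
  have ht0 : Real.sqrt (2 * (1 + c₀)) ≠ 0 := (Real.sqrt_pos.mpr (by linarith)).ne'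
  have hr2 : Real.sqrt (2 * (1 - c₀)) ^ 2 = 2 * (1 - c₀) := Real.sq_sqrt (by linarith)
  have hr0 : Real.sqrt (2 * (1 - c₀)) ≠ 0 := (Real.sqrt_pos.mpr (by linarith)).ne'
  refine ⟨?_, ?_, ?_, ?_, ?_, ?_⟩
  · simp only [E1a, E1b, smul_dotProduct, dotProduct_smul,
      neg_dotProduct, dotProduct_neg, smul_eq_mul, hn1, hn2]
    set s := Real.sqrt (1 - c₀ ^ 2) with hsdef
    field_simp
    nlinarith [hs2]
  · simp only [E2a, smul_dotProduct, dotProduct_smul, smul_eq_mul,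
      dotProduct_zero, cross_dot_cross, hsph1x, hn1, hφN1, hNt1]
    set t := Real.sqrt (2 * (1 + c₀)) with htdef
    field_simp
    nlinarith [ht2]
  · simp only [E3b, smul_dotProduct, dotProduct_smul, smul_eq_mul,
      zero_dotProduct, cross_dot_cross, hsph2x, hn2, hψN2, hNt2]
    set r := Real.sqrt (2 * (1 - c₀)) with hrdef
    field_simp
    nlinarith [hr2]
  · have hz : N1 x ⬝ᵥ crossProduct (φ x) (N1 x) = 0 := dot_cross_self (φ x) (N1 x)
    simp [E1a, E2a, smul_dotProduct, dotProduct_smul, hz]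
  · have hz : N2 x ⬝ᵥ crossProduct (ψ x) (N2 x) = 0 := dot_cross_self (ψ x) (N2 x)
    simp [E1b, E3b, smul_dotProduct, dotProduct_smul,
      neg_dotProduct, dotProduct_neg, hz]
  · simp

/-- For an orientable hypersurface `Φ = (φ,ψ) : M → S²×S²` with
`C = ⟨PN,N⟩` constantly equal to `c₀ ∈ (-1,1)`, one has `AX = 0` (so `0` is a principal
curvature everywhere), and in the orthonormal frame `E₁ = X/√(1-c₀²)`,
`E₂ = (J₁N+J₂N)/√(2(1+c₀))`, `E₃ = (J₁N-J₂N)/√(2(1-c₀))` the tangential product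
structure is `Pᵀ = diag(-c₀, 1, -1)`. -/
theorem stmt_14
    (X : V3 → V3) (A : V3 → V3 →ₗ[ℝ] V3)
    (hc₀ : c₀ ∈ Set.Ioo (-1 : ℝ) 1)
    (hφ : ContDiff ℝ 2 φ) (hψ : ContDiff ℝ 2 ψ)
    (hN1 : ContDiff ℝ 2 N1) (hN2 : ContDiff ℝ 2 N2)
    (hsph1 : ∀ x, φ x ⬝ᵥ φ x = 1) (hsph2 : ∀ x, ψ x ⬝ᵥ ψ x = 1)
    (hNunit : ∀ x, N1 x ⬝ᵥ N1 x + N2 x ⬝ᵥ N2 x = 1)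
    (hNtan1 : ∀ x, N1 x ⬝ᵥ φ x = 0) (hNtan2 : ∀ x, N2 x ⬝ᵥ ψ x = 0)
    (hNnorm : ∀ x v, N1 x ⬝ᵥ Dv φ x v + N2 x ⬝ᵥ Dv ψ x v = 0)
    (hW1 : ∀ x v, fderiv ℝ N1 x v + (N1 x ⬝ᵥ Dv φ x v) • φ x = -(Dv φ x (A x v)))
    (hW2 : ∀ x v, fderiv ℝ N2 x v + (N2 x ⬝ᵥ Dv ψ x v) • ψ x = -(Dv ψ x (A x v)))
    -- C ≡ c₀:
    (hC : ∀ x, N1 x ⬝ᵥ N1 x - N2 x ⬝ᵥ N2 x = c₀)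
    -- X is the tangent part of PN: dΦ(X) = ((1-c₀)N₁, -(1+c₀)N₂):
    (hX1 : ∀ x, Dv φ x (X x) = (1 - c₀) • N1 x)
    (hX2 : ∀ x, Dv ψ x (X x) = -((1 + c₀) • N2 x)) :
    -- AX = 0:
    (∀ x, Dv φ x (A x (X x)) = 0 ∧ Dv ψ x (A x (X x)) = 0) ∧
    -- Pᵀ = diag(-c₀, 1, -1) in the frame {E₁,E₂,E₃} (⟨PE_i,E_j⟩ entries):
    (∀ x,
      E1a c₀ N1 x ⬝ᵥ E1a c₀ N1 x - E1b c₀ N2 x ⬝ᵥ E1b c₀ N2 x = -c₀ ∧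
      E2a c₀ φ N1 x ⬝ᵥ E2a c₀ φ N1 x - (0 : V3) ⬝ᵥ (0 : V3) = 1 ∧
      (0 : V3) ⬝ᵥ (0 : V3) - E3b c₀ ψ N2 x ⬝ᵥ E3b c₀ ψ N2 x = -1 ∧
      E1a c₀ N1 x ⬝ᵥ E2a c₀ φ N1 x - E1b c₀ N2 x ⬝ᵥ (0 : V3) = 0 ∧
      E1a c₀ N1 x ⬝ᵥ (0 : V3) - E1b c₀ N2 x ⬝ᵥ E3b c₀ ψ N2 x = 0 ∧
      E2a c₀ φ N1 x ⬝ᵥ (0 : V3) - (0 : V3) ⬝ᵥ E3b c₀ ψ N2 x = 0) := by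
  obtain ⟨hm1, hp1⟩ := hc₀
  have h1p : (0:ℝ) < 1 + c₀ := by linarith
  have h1m : (0:ℝ) < 1 - c₀ := by linarith
  have hsq : (0:ℝ) < 1 - c₀ ^ 2 := by nlinarith
  simp only [Dv] at hNnorm hW1 hW2 hX1 hX2 ⊢
  have dφ : Differentiable ℝ φ := hφ.differentiable (by norm_num)
  have dψ : Differentiable ℝ ψ := hψ.differentiable (by norm_num)
  have dN1 : Differentiable ℝ N1 := hN1.differentiable (by norm_num)
  have dN2 : Differentiable ℝ N2 := hN2.differentiable (by norm_num)
  have hN1sq : ∀ x, N1 x ⬝ᵥ N1 x = (1 + c₀) / 2 := fun x => by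
    have h1 := hNunit x; have h2 := hC x; linarith
  have hN2sq : ∀ x, N2 x ⬝ᵥ N2 x = (1 - c₀) / 2 := fun x => by
    have h1 := hNunit x; have h2 := hC x; linarith
  constructor
  · -- Part 1 : AX = 0
    intro x
    have hφtan : ∀ v, φ x ⬝ᵥ fderiv ℝ φ x v = 0 := by
      intro v
      have h := dotP_const_deriv (dφ x).hasFDerivAt (dφ x).hasFDerivAt hsph1 v
      rw [dotProduct_comm] at h; linarith
    have hψtan : ∀ v, ψ x ⬝ᵥ fderiv ℝ ψ x v = 0 := by
      intro v
      have h := dotP_const_deriv (dψ x).hasFDerivAt (dψ x).hasFDerivAt hsph2 v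
      rw [dotProduct_comm] at h; linarith
    have hN1d : ∀ v, N1 x ⬝ᵥ fderiv ℝ N1 x v = 0 := by
      intro v
      have h := dotP_const_deriv (dN1 x).hasFDerivAt (dN1 x).hasFDerivAt hN1sq v
      rw [dotProduct_comm] at h; linarith
    have hN2d : ∀ v, N2 x ⬝ᵥ fderiv ℝ N2 x v = 0 := by
      intro v
      have h := dotP_const_deriv (dN2 x).hasFDerivAt (dN2 x).hasFDerivAt hN2sq v
      rw [dotProduct_comm] at h; linarith
    have hw1 : ∀ v, fderiv ℝ N1 x v
        = -(fderiv ℝ φ x (A x v)) - (N1 x ⬝ᵥ fderiv ℝ φ x v) • φ x :=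
      fun v => eq_sub_of_add_eq (hW1 x v)
    have hw2 : ∀ v, fderiv ℝ N2 x v
        = -(fderiv ℝ ψ x (A x v)) - (N2 x ⬝ᵥ fderiv ℝ ψ x v) • ψ x :=
      fun v => eq_sub_of_add_eq (hW2 x v)
    have valE1 : ∀ v, N1 x ⬝ᵥ fderiv ℝ φ x (A x v) = 0 := by
      intro v
      have h := hN1d v
      rw [hw1 v] at h
      simp only [dotProduct_sub, dotProduct_neg, dotProduct_smul,
        hNtan1 x, smul_eq_mul, mul_zero, sub_zero, neg_eq_zero] at h
      exact h
    have valE2 : ∀ v, N2 x ⬝ᵥ fderiv ℝ ψ x (A x v) = 0 := by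
      intro v
      have h := hNnorm x (A x v); have h2 := valE1 v; linarith
    -- second derivative machinery
    have hdφ1 : ContDiff ℝ 1 (fderiv ℝ φ) := hφ.fderiv_right le_rfl
    have hdψ1 : ContDiff ℝ 1 (fderiv ℝ ψ) := hψ.fderiv_right le_rfl
    have hgφ : ∀ v, Differentiable ℝ (fun y => fderiv ℝ φ y v) := fun v =>
      (hdφ1.clm_apply contDiff_const).differentiable one_ne_zero
    have hgψ : ∀ v, Differentiable ℝ (fun y => fderiv ℝ ψ y v) := fun v =>
      (hdψ1.clm_apply contDiff_const).differentiable one_ne_zero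
    have hsymφ : ∀ u v, fderiv ℝ (fun y => fderiv ℝ φ y v) x u
        = fderiv ℝ (fun y => fderiv ℝ φ y u) x v := by
      intro u v
      have hdiff : DifferentiableAt ℝ (fderiv ℝ φ) x := (hdφ1.differentiable one_ne_zero) x
      have e : ∀ w : V3, fderiv ℝ (fun y => fderiv ℝ φ y w) x
          = (fderiv ℝ (fderiv ℝ φ) x).flip w := by
        intro w
        simpa using fderiv_clm_apply (c := fderiv ℝ φ) (u := fun _ => w) hdiff
          (differentiableAt_const w)
      rw [e u, e v]
      simp only [ContinuousLinearMap.flip_apply]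
      exact (hφ.contDiffAt.isSymmSndFDerivAt (by simp)) u v
    have hsymψ : ∀ u v, fderiv ℝ (fun y => fderiv ℝ ψ y v) x u
        = fderiv ℝ (fun y => fderiv ℝ ψ y u) x v := by
      intro u v
      have hdiff : DifferentiableAt ℝ (fderiv ℝ ψ) x := (hdψ1.differentiable one_ne_zero) x
      have e : ∀ w : V3, fderiv ℝ (fun y => fderiv ℝ ψ y w) x
          = (fderiv ℝ (fderiv ℝ ψ) x).flip w := by
        intro w
        simpa using fderiv_clm_apply (c := fderiv ℝ ψ) (u := fun _ => w) hdiff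
          (differentiableAt_const w)
      rw [e u, e v]
      simp only [ContinuousLinearMap.flip_apply]
      exact (hψ.contDiffAt.isSymmSndFDerivAt (by simp)) u v
    have key : ∀ v u,
        fderiv ℝ N1 x u ⬝ᵥ fderiv ℝ φ x v + N1 x ⬝ᵥ fderiv ℝ (fun y => fderiv ℝ φ y v) x u
        + (fderiv ℝ N2 x u ⬝ᵥ fderiv ℝ ψ x v
          + N2 x ⬝ᵥ fderiv ℝ (fun y => fderiv ℝ ψ y v) x u) = 0 := by
      intro v u
      have H1 := hasFDerivAt_dotP (dN1 x).hasFDerivAt ((hgφ v) x).hasFDerivAt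
      have H2 := hasFDerivAt_dotP (dN2 x).hasFDerivAt ((hgψ v) x).hasFDerivAt
      have e1 := fderiv_dotP_apply (dN1 x).hasFDerivAt ((hgφ v) x).hasFDerivAt u
      have e2 := fderiv_dotP_apply (dN2 x).hasFDerivAt ((hgψ v) x).hasFDerivAt u
      have e0 : fderiv ℝ (fun y => N1 y ⬝ᵥ fderiv ℝ φ y v + N2 y ⬝ᵥ fderiv ℝ ψ y v) x = 0 := by
        rw [show (fun y => N1 y ⬝ᵥ fderiv ℝ φ y v + N2 y ⬝ᵥ fderiv ℝ ψ y v)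
            = (fun _ => (0:ℝ)) from funext fun y => hNnorm y v]
        simp
      have eadd : fderiv ℝ (fun y => N1 y ⬝ᵥ fderiv ℝ φ y v + N2 y ⬝ᵥ fderiv ℝ ψ y v) x
          = fderiv ℝ (fun y => N1 y ⬝ᵥ fderiv ℝ φ y v) x
            + fderiv ℝ (fun y => N2 y ⬝ᵥ fderiv ℝ ψ y v) x :=
        fderiv_add H1.differentiableAt H2.differentiableAt
      have := congrArg (fun (L : V3 →L[ℝ] ℝ) => L u) (eadd.symm.trans e0)
      simp only [ContinuousLinearMap.add_apply, ContinuousLinearMap.zero_apply] at this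
      rw [e1, e2] at this
      have r1 : (fderiv ℝ φ x v) ⬝ᵥ N1 x = N1 x ⬝ᵥ fderiv ℝ φ x v := dotProduct_comm _ _
      have r2 : (fderiv ℝ N1 x u) ⬝ᵥ fderiv ℝ φ x v = fderiv ℝ N1 x u ⬝ᵥ fderiv ℝ φ x v := rfl
      linarith [this]
    have hsecond : ∀ u v,
        fderiv ℝ N1 x u ⬝ᵥ fderiv ℝ φ x v + fderiv ℝ N2 x u ⬝ᵥ fderiv ℝ ψ x v
        = fderiv ℝ N1 x v ⬝ᵥ fderiv ℝ φ x u + fderiv ℝ N2 x v ⬝ᵥ fderiv ℝ ψ x u := by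
      intro u v
      have k1 := key v u
      have k2 := key u v
      have c1 : N1 x ⬝ᵥ fderiv ℝ (fun y => fderiv ℝ φ y v) x u
          = N1 x ⬝ᵥ fderiv ℝ (fun y => fderiv ℝ φ y u) x v := by rw [hsymφ u v]
      have c2 : N2 x ⬝ᵥ fderiv ℝ (fun y => fderiv ℝ ψ y v) x u
          = N2 x ⬝ᵥ fderiv ℝ (fun y => fderiv ℝ ψ y u) x v := by rw [hsymψ u v]
      linarith
    have rφ : ∀ w z, fderiv ℝ N1 x w ⬝ᵥ fderiv ℝ φ x z
        = -(fderiv ℝ φ x (A x w) ⬝ᵥ fderiv ℝ φ x z) := by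
      intro w z
      rw [hw1 w]
      simp [sub_dotProduct, neg_dotProduct, smul_dotProduct, hφtan]
    have rψ : ∀ w z, fderiv ℝ N2 x w ⬝ᵥ fderiv ℝ ψ x z
        = -(fderiv ℝ ψ x (A x w) ⬝ᵥ fderiv ℝ ψ x z) := by
      intro w z
      rw [hw2 w]
      simp [sub_dotProduct, neg_dotProduct, smul_dotProduct, hψtan]
    have hS := hsecond (X x) (A x (X x))
    rw [rφ, rφ, rψ, rψ, hX1 x, hX2 x] at hS
    have z1 : fderiv ℝ φ x (A x (A x (X x))) ⬝ᵥ ((1 - c₀) • N1 x) = 0 := by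
      rw [dotProduct_smul, dotProduct_comm]
      simp [valE1]
    have z2 : fderiv ℝ ψ x (A x (A x (X x))) ⬝ᵥ (-((1 + c₀) • N2 x)) = 0 := by
      rw [dotProduct_neg, dotProduct_smul, dotProduct_comm]
      simp [valE2]
    rw [z1, z2] at hS
    set T := fderiv ℝ φ x (A x (X x)) with hT
    set S := fderiv ℝ ψ x (A x (X x)) with hSdef
    have hzero : T ⬝ᵥ T + S ⬝ᵥ S = 0 := by linarith
    have hTnn : 0 ≤ T ⬝ᵥ T := Finset.sum_nonneg fun i _ => mul_self_nonneg _
    have hSnn : 0 ≤ S ⬝ᵥ S := Finset.sum_nonneg fun i _ => mul_self_nonneg _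
    exact ⟨dotProduct_self_eq_zero.mp (by linarith),
      dotProduct_self_eq_zero.mp (by linarith)⟩
  · -- Part 2 : the frame computation
    intro x
    exact part2_aux c₀ φ ψ N1 N2 x hm1 hp1 (hsph1 x) (hsph2 x) (hN1sq x) (hN2sq x)
      (hNtan1 x) (hNtan2 x)
end
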